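/- For the two-layer linear network gradient flow dA/dt = -η_a W Xᵀ(Xβ - Y), dWᵀ/dt = -η_w Xᵀ(Xβ - Y)Aᵀ with β = WᵀA, the h × h matrix Δ = η_w A Aᵀ - η_a W Wᵀ is conserved along the flow. -/

import Mathlib

open Matrix

/-- Δ = η_w A Aᵀ - η_a W Wᵀ is conserved along the two-layer linear network flow. -/
theorem conserved_Delta_wide (h d c n : ℕ)
    (X : Matrix (Fin n) (Fin d) ℝ) (Y : Matrix (Fin n) (Fin c) ℝ)
    (ηa ηw : ℝ) (hηa : 0 < ηa) (hηw : 0 < ηw)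
    (W : ℝ → Matrix (Fin h) (Fin d) ℝ) (A : ℝ → Matrix (Fin h) (Fin c) ℝ)
    (hA : ∀ t i j, HasDerivAt (fun s => A s i j)
      ((-ηa • (W t * (Xᵀ * (X * ((W t)ᵀ * A t) - Y)))) i j) t)
    (hW : ∀ t i j, HasDerivAt (fun s => W s i j)
      ((-ηw • (A t * (X * ((W t)ᵀ * A t) - Y)ᵀ * X)) i j) t) :
    ∀ t i j, HasDerivAt (fun s => (ηw • (A s * (A s)ᵀ) - ηa • (W s * (W s)ᵀ)) i j) 0 t := by
  intro t i j
  set A' : Matrix (Fin h) (Fin c) ℝ :=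
    -ηa • (W t * (Xᵀ * (X * ((W t)ᵀ * A t) - Y))) with hA'def
  set W' : Matrix (Fin h) (Fin d) ℝ :=
    -ηw • (A t * (X * ((W t)ᵀ * A t) - Y)ᵀ * X) with hW'def
  have key : (ηw • (A' * (A t)ᵀ + A t * A'ᵀ) - ηa • (W' * (W t)ᵀ + W t * W'ᵀ)) = 0 := by
    rw [hA'def, hW'def]
    set R : Matrix (Fin n) (Fin c) ℝ := X * ((W t)ᵀ * A t) - Y with hR
    simp only [Matrix.smul_mul, Matrix.mul_smul, Matrix.transpose_smul, Matrix.transpose_mul,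
      Matrix.transpose_transpose, smul_add, smul_smul, Matrix.mul_assoc]
    rw [sub_eq_zero]
    ring_nf
    exact add_comm _ _
  have hderiv : HasDerivAt (fun s => (ηw • (A s * (A s)ᵀ) - ηa • (W s * (W s)ᵀ)) i j)
      ((ηw • (A' * (A t)ᵀ + A t * A'ᵀ) - ηa • (W' * (W t)ᵀ + W t * W'ᵀ)) i j) t := by
    have hAsum : HasDerivAt (fun s => ∑ k, A s i k * A s j k)
        (∑ k, (A' i k * A t j k + A t i k * A' j k)) t :=
      HasDerivAt.fun_sum (fun k _ => (hA t i k).mul (hA t j k))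
    have hWsum : HasDerivAt (fun s => ∑ k, W s i k * W s j k)
        (∑ k, (W' i k * W t j k + W t i k * W' j k)) t :=
      HasDerivAt.fun_sum (fun k _ => (hW t i k).mul (hW t j k))
    have := (hAsum.const_mul ηw).fun_sub (hWsum.const_mul ηa)
    convert this using 2
    · rfl
    · rfl
    all_goals
      simp [Matrix.sub_apply, Matrix.smul_apply, Matrix.mul_apply, Matrix.add_apply,
        Matrix.transpose_apply, Finset.mul_sum, Finset.sum_add_distrib, smul_eq_mul,
        mul_add]
  rw [key] at hderiv
  simpa using hderiv
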